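/- For every (x, y) with (x, y) ≠ (0, 0) and every t ∈ ℝ, the improper integral a(x, y, t) = lim_{M→∞} ∫₀^M I(t − R(z)/c)/R(z) dz exists and is finite, where R(z) = √(z² + x² + y²). -/

import Mathlib

open Real Filter MeasureTheory

theorem retarded_potential_converges
    (c T : ℝ) (hc : 0 < c) (hT : 0 < T)
    (I : ℝ → ℝ) (hI : ContDiff ℝ 4 I) (hper : Function.Periodic I T)
    (hmean : (∫ s in (0:ℝ)..T, I s) = 0)
    (x y t : ℝ) (hxy : (x, y) ≠ ((0 : ℝ), (0 : ℝ))) :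
    ∃ L : ℝ, Tendsto
      (fun M : ℝ => ∫ z in (0:ℝ)..M,
        I (t - Real.sqrt (z ^ 2 + x ^ 2 + y ^ 2) / c)
          / Real.sqrt (z ^ 2 + x ^ 2 + y ^ 2))
      atTop (nhds L) := by
  have hIcont : Continuous I := hI.continuous
  set R : ℝ → ℝ := fun z => Real.sqrt (z ^ 2 + x ^ 2 + y ^ 2) with hRdef
  set f : ℝ → ℝ := fun z => I (t - R z / c) / R z with hfdef
  show ∃ L : ℝ, Tendsto (fun M : ℝ => ∫ z in (0:ℝ)..M, f z) atTop (nhds L)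
  -- positivity of x^2 + y^2
  have hr2 : 0 < x ^ 2 + y ^ 2 := by
    rcases eq_or_ne x 0 with hx | hx
    · rcases eq_or_ne y 0 with hy | hy
      · exact absurd (by simp [hx, hy]) hxy
      · nlinarith [sq_nonneg x, sq_nonneg y, sq_abs y, abs_pos.2 hy]
    · nlinarith [sq_nonneg y, abs_pos.2 hx, sq_abs x]
  have hargpos : ∀ z : ℝ, 0 < z ^ 2 + x ^ 2 + y ^ 2 := fun z => by nlinarith [sq_nonneg z]
  have hRpos : ∀ z, 0 < R z := fun z => Real.sqrt_pos.2 (hargpos z)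
  have hRcont : Continuous R := by
    exact Real.continuous_sqrt.comp (by continuity)
  have hfcont : Continuous f :=
    (hIcont.comp (continuous_const.sub (hRcont.div_const c))).div hRcont fun z => (hRpos z).ne'
  -- antiderivative of I
  set J : ℝ → ℝ := fun s => ∫ u in (0:ℝ)..s, I u with hJdef
  have hJder : ∀ s, HasDerivAt J (I s) s := fun s =>
    (hIcont.integral_hasStrictDerivAt 0 s).hasDerivAt
  have hJcont : Continuous J := by
    have : Differentiable ℝ J := fun s => (hJder s).differentiableAt
    exact this.continuous
  have hJper : Function.Periodic J T := by
    intro s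
    have h1 : (∫ u in s..s + T, I u) = ∫ u in (0:ℝ)..0 + T, I u :=
      hper.intervalIntegral_add_eq s 0
    have h2 : (∫ u in (0:ℝ)..s, I u) + ∫ u in s..s + T, I u = ∫ u in (0:ℝ)..s + T, I u :=
      intervalIntegral.integral_add_adjacent_intervals (hIcont.intervalIntegrable _ _)
        (hIcont.intervalIntegrable _ _)
    have h3 : (∫ u in s..s + T, I u) = 0 := by rw [h1]; simpa using hmean
    simp only [hJdef]
    rw [← h2, h3, add_zero]
  obtain ⟨C, hC⟩ : ∃ C, ∀ s, ‖J s‖ ≤ C := by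
    obtain ⟨C, hC⟩ := (hJper.isBounded_of_continuous hT.ne' hJcont).exists_norm_le
    exact ⟨C, fun s => hC _ (Set.mem_range_self s)⟩
  -- derivative of R
  have hRder : ∀ z, HasDerivAt R (z / R z) z := by
    intro z
    have h1 : HasDerivAt (fun z : ℝ => z ^ 2 + x ^ 2 + y ^ 2) (2 * z) z := by
      have := (hasDerivAt_pow 2 z).add_const (x ^ 2 + y ^ 2)
      simpa [← add_assoc] using this
    have h2 := (Real.hasDerivAt_sqrt (hargpos z).ne').comp z h1
    refine h2.congr_deriv ?_
    rw [hRdef]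
    have := (hRpos z).ne'
    field_simp
  set g : ℝ → ℝ := fun z => -c * J (t - R z / c) / z with hgdef
  set q : ℝ → ℝ := fun z => c * J (t - R z / c) / z ^ 2 with hqdef
  have hgder : ∀ z : ℝ, z ≠ 0 → HasDerivAt g (f z + q z) z := by
    intro z hz
    have h1 : HasDerivAt (fun z => t - R z / c) (-(z / R z / c)) z :=
      ((hRder z).div_const c).const_sub t
    have h2 : HasDerivAt (fun z => J (t - R z / c)) (I (t - R z / c) * -(z / R z / c)) z :=
      (hJder _).comp z h1
    have h3 : HasDerivAt (fun z => -c * J (t - R z / c))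
        (-c * (I (t - R z / c) * -(z / R z / c))) z := h2.const_mul _
    have h4 := h3.div (hasDerivAt_id z) hz
    have h5 : (-c * (I (t - R z / c) * -(z / R z / c)) * z - -c * J (t - R z / c) * 1) / z ^ 2
        = f z + q z := by
      have hRz := (hRpos z).ne'
      simp only [hfdef, hqdef]
      field_simp
      ring
    simp only [id_eq] at h4
    rw [h5] at h4
    exact h4
  -- continuity of q away from 0
  have hqcontOn : ContinuousOn q {z : ℝ | z ≠ 0} := by
    apply ContinuousOn.div
    · exact (continuous_const.mul (hJcont.comp (continuous_const.sub (hRcont.div_const c)))).continuousOn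
    · exact (continuous_pow 2).continuousOn
    · intro z hz; exact pow_ne_zero 2 hz
  -- q is integrable on Ioi 1
  have hqint : IntegrableOn q (Set.Ioi (1:ℝ)) volume := by
    have hmeas : AEStronglyMeasurable q (volume.restrict (Set.Ioi (1:ℝ))) :=
      (hqcontOn.mono fun z hz => ne_of_gt (lt_trans one_pos hz)).aestronglyMeasurable
        measurableSet_Ioi
    have hmaj : IntegrableOn (fun z : ℝ => c * C * z ^ (-2 : ℝ)) (Set.Ioi 1) volume :=
      (integrableOn_Ioi_rpow_of_lt (by norm_num) one_pos).const_mul (c * C)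
    apply Integrable.mono' hmaj hmeas
    filter_upwards [ae_restrict_mem measurableSet_Ioi] with z hz
    have hz1 : (1:ℝ) < z := hz
    have hz0 : (0:ℝ) < z := lt_trans one_pos hz1
    have hrp : z ^ (-2 : ℝ) = (z ^ 2)⁻¹ := by
      rw [show (-2 : ℝ) = -(2:ℕ) by norm_num, Real.rpow_neg hz0.le, Real.rpow_natCast]
    rw [hrp, hqdef]
    have hC0 : 0 ≤ C := le_trans (norm_nonneg _) (hC 0)
    rw [Real.norm_eq_abs, abs_div, abs_of_pos (pow_pos hz0 2), abs_mul, abs_of_pos hc,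
      div_eq_mul_inv]
    have : |J (t - R z / c)| ≤ C := by rw [← Real.norm_eq_abs]; exact hC _
    gcongr
  set K := ∫ z in Set.Ioi (1:ℝ), q z with hKdef
  have hKlim : Tendsto (fun M => ∫ z in (1:ℝ)..M, q z) atTop (nhds K) :=
    intervalIntegral_tendsto_integral_Ioi 1 hqint tendsto_id
  -- g tends to 0
  have hg0 : Tendsto g atTop (nhds 0) := by
    apply squeeze_zero_norm' (a := fun M : ℝ => c * C * M⁻¹)
    · filter_upwards [eventually_ge_atTop (1:ℝ)] with M hM
      have hM0 : (0:ℝ) < M := lt_of_lt_of_le one_pos hM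
      rw [hgdef]
      rw [Real.norm_eq_abs, abs_div, abs_of_pos hM0, abs_mul, abs_neg, abs_of_pos hc,
        div_eq_mul_inv]
      have : |J (t - R M / c)| ≤ C := by rw [← Real.norm_eq_abs]; exact hC _
      gcongr
    · simpa using tendsto_inv_atTop_zero.const_mul (c * C)
  -- main identity
  have hmain : ∀ᶠ M in atTop, (∫ z in (1:ℝ)..M, f z)
      = (g M - g 1) - ∫ z in (1:ℝ)..M, q z := by
    filter_upwards [eventually_ge_atTop (1:ℝ)] with M hM
    have hsub : Set.uIcc (1:ℝ) M ⊆ {z : ℝ | z ≠ 0} := by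
      rw [Set.uIcc_of_le hM]
      intro z hz
      exact ne_of_gt (lt_of_lt_of_le one_pos hz.1)
    have hder : ∀ z ∈ Set.uIcc (1:ℝ) M, HasDerivAt g (f z + q z) z :=
      fun z hz => hgder z (hsub hz)
    have hqi : IntervalIntegrable q volume 1 M := (hqcontOn.mono hsub).intervalIntegrable
    have hfi : IntervalIntegrable f volume 1 M := hfcont.intervalIntegrable _ _
    have h := intervalIntegral.integral_eq_sub_of_hasDerivAt hder (hfi.add hqi)
    rw [intervalIntegral.integral_add hfi hqi] at h
    linarith
  have hlim1 : Tendsto (fun M => ∫ z in (1:ℝ)..M, f z) atTop (nhds ((0 - g 1) - K)) := by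
    have := ((hg0.sub_const (g 1)).sub hKlim)
    exact this.congr' (hmain.mono fun M h => h.symm)
  refine ⟨(∫ z in (0:ℝ)..1, f z) + ((0 - g 1) - K), ?_⟩
  have hsplit : ∀ M : ℝ, (∫ z in (0:ℝ)..M, f z)
      = (∫ z in (0:ℝ)..1, f z) + ∫ z in (1:ℝ)..M, f z := fun M =>
    (intervalIntegral.integral_add_adjacent_intervals (hfcont.intervalIntegrable _ _)
      (hfcont.intervalIntegrable _ _)).symm
  exact (Tendsto.add (tendsto_const_nhds (x := ∫ z in (0:ℝ)..1, f z)) hlim1).congr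
    fun M => (hsplit M).symm
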